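/- Eigenvalue repulsion, Neumann case: for any two distinct eigenvalues E_i ≠ E_j of the Neumann Hamiltonian H, one has |E_i − E_j| ≥ π(η(W)^{−1} − 1)/(η(W)^{−N} − 1). -/

import Mathlib

/-- The quadratic form `q(x, φ) = 1 − 2x sin φ cos φ + x² sin² φ`. -/
noncomputable def qform (x φ : ℝ) : ℝ :=
  1 - 2 * x * Real.sin φ * Real.cos φ + x ^ 2 * Real.sin φ ^ 2

/-- `η(W) = min { q(x, φ) : |x| ≤ W + 1, 0 ≤ φ ≤ π }`. -/
noncomputable def eta (W : ℝ) : ℝ :=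
  sInf ((fun p : ℝ × ℝ => qform p.1 p.2) '' (Set.Icc (-(W + 1)) (W + 1) ×ˢ Set.Icc 0 Real.pi))

/-- The Neumann Hamiltonian: the `N × N` symmetric tridiagonal matrix with off-diagonal
entries `1`, diagonal entries `ε_n` for interior sites, and corner diagonal entries
augmented by `1` (coming from the boundary conditions `u_0 = u_1`, `u_{N+1} = u_N`). -/
def neumannH (N : ℕ) (ε : Fin N → ℝ) : Matrix (Fin N) (Fin N) ℝ :=
  fun i j =>
    if i = j then
      ε i + (if i.val = 0 then 1 else 0) + (if i.val = N - 1 then 1 else 0)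
    else if i.val + 1 = j.val ∨ j.val + 1 = i.val then 1 else 0

lemma ern_qform_nonneg (x φ : ℝ) : 0 ≤ qform x φ := by
  have h := Real.sin_sq_add_cos_sq φ
  simp only [qform]
  nlinarith [sq_nonneg (Real.cos φ - x * Real.sin φ)]

lemma ern_qform_lower (W x φ : ℝ) (hx : x ^ 2 ≤ (W + 1) ^ 2) :
    1 ≤ (2 + 2 * (W + 1) ^ 2) * qform x φ := by
  have h := Real.sin_sq_add_cos_sq φ
  have hq := ern_qform_nonneg x φ
  have hmul : 0 ≤ ((W + 1) ^ 2 - x ^ 2) * qform x φ :=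
    mul_nonneg (by linarith) hq
  simp only [qform] at *
  nlinarith [sq_nonneg (Real.cos φ - 2 * x * Real.sin φ), sq_nonneg (Real.sin φ),
    sq_nonneg (x * (Real.cos φ - x * Real.sin φ))]

def ernB (b : ℝ) : ℕ → ℝ
  | 0 => 0
  | 1 => 1
  | (n + 2) => b * ernB b (n + 1) + ernB b n

lemma ernB_zero (b : ℝ) : ernB b 0 = 0 := rfl
lemma ernB_one (b : ℝ) : ernB b 1 = 1 := rfl
lemma ernB_add_two (b : ℝ) (n : ℕ) : ernB b (n + 2) = b * ernB b (n + 1) + ernB b n := rfl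

lemma ernB_nonneg {b : ℝ} (hb : 0 ≤ b) : ∀ n, 0 ≤ ernB b n := by
  intro n
  induction n using Nat.strong_induction_on with
  | _ n ih =>
    match n with
    | 0 => simp [ernB]
    | 1 => simp [ernB]
    | (m + 2) =>
      have h1 := ih (m + 1) (by omega)
      have h2 := ih m (by omega)
      show 0 ≤ b * ernB b (m + 1) + ernB b m
      exact add_nonneg (mul_nonneg hb h1) h2

lemma ern_row (N : ℕ) (ε : Fin N → ℝ) (w : Fin N → ℝ) (i : Fin N) :
    (neumannH N ε).mulVec w i =
      (if h : i.val + 1 < N then w ⟨i.val + 1, h⟩ else 0)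
      + (if h : 0 < i.val then w ⟨i.val - 1, lt_of_le_of_lt (Nat.sub_le _ _) i.isLt⟩ else 0)
      + (ε i + (if i.val = 0 then 1 else 0) + (if i.val = N - 1 then 1 else 0)) * w i := by
  classical
  have key : ∀ j : Fin N, neumannH N ε i j * w j =
      (if j = i then (ε i + (if i.val = 0 then 1 else 0) + (if i.val = N - 1 then 1 else 0)) * w i else 0)
      + ((if j.val = i.val + 1 then w j else 0) + (if j.val + 1 = i.val then w j else 0)) := by
    intro j
    simp only [neumannH]
    by_cases h1 : i = j
    · subst h1
      have hA : ¬ (i.val = i.val + 1) := by omega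
      have hB : ¬ (i.val + 1 = i.val) := by omega
      rw [if_pos rfl, if_pos rfl, if_neg hA, if_neg hB]; ring
    · have h1' : ¬ j = i := fun h => h1 h.symm
      rw [if_neg h1, if_neg h1']
      by_cases h2 : i.val + 1 = j.val
      · have h3 : ¬ (j.val + 1 = i.val) := by omega
        rw [if_pos (Or.inl h2), if_pos h2.symm, if_neg h3]; ring
      · by_cases h3 : j.val + 1 = i.val
        · rw [if_pos (Or.inr h3), if_neg (fun h => h2 h.symm), if_pos h3]; ring
        · rw [if_neg (by tauto), if_neg (fun h => h2 h.symm), if_neg h3]; ring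
  show ∑ j, neumannH N ε i j * w j = _
  rw [Finset.sum_congr rfl (fun j _ => key j), Finset.sum_add_distrib,
    Finset.sum_add_distrib, Finset.sum_ite_eq' Finset.univ i]
  have hS1 : (∑ j : Fin N, if j.val = i.val + 1 then w j else 0)
      = (if h : i.val + 1 < N then w ⟨i.val + 1, h⟩ else 0) := by
    by_cases h : i.val + 1 < N
    · rw [dif_pos h]
      have : ∀ j : Fin N, (if j.val = i.val + 1 then w j else 0)
          = (if j = (⟨i.val + 1, h⟩ : Fin N) then w j else 0) := by
        intro j
        apply if_congr _ rfl rfl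
        rw [Fin.ext_iff]
      rw [Finset.sum_congr rfl (fun j _ => this j), Finset.sum_ite_eq' Finset.univ]
      simp
    · rw [dif_neg h]
      apply Finset.sum_eq_zero
      intro j _
      rw [if_neg]
      have := j.isLt; omega
  have hS2 : (∑ j : Fin N, if j.val + 1 = i.val then w j else 0)
      = (if h : 0 < i.val then w ⟨i.val - 1, lt_of_le_of_lt (Nat.sub_le _ _) i.isLt⟩ else 0) := by
    by_cases h : 0 < i.val
    · rw [dif_pos h]
      have : ∀ j : Fin N, (if j.val + 1 = i.val then w j else 0)
          = (if j = (⟨i.val - 1, lt_of_le_of_lt (Nat.sub_le _ _) i.isLt⟩ : Fin N) then w j else 0) := by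
        intro j
        apply if_congr _ rfl rfl
        have hval : ((⟨i.val - 1, lt_of_le_of_lt (Nat.sub_le _ _) i.isLt⟩ : Fin N)).val = i.val - 1 := rfl
        rw [Fin.ext_iff, hval]
        omega
      rw [Finset.sum_congr rfl (fun j _ => this j), Finset.sum_ite_eq' Finset.univ]
      simp
    · rw [dif_neg h]
      apply Finset.sum_eq_zero
      intro j _
      rw [if_neg]
      omega
  rw [hS1, hS2]
  simp [Finset.mem_univ]
  ring

lemma ern_symm (N : ℕ) (ε : Fin N → ℝ) : (neumannH N ε).transpose = neumannH N ε := by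
  ext i j
  simp only [Matrix.transpose_apply, neumannH]
  by_cases h : i = j
  · subst h; rfl
  · rw [if_neg (fun hh => h hh.symm), if_neg h]
    exact if_congr or_comm rfl rfl

lemma ern_gersh (N : ℕ) (hN0 : 0 < N) (W : ℝ) (ε : Fin N → ℝ)
    (hε : ∀ n, ε n ∈ Set.Icc 0 W) (E : ℝ) (χ : Fin N → ℝ) (hχ : χ ≠ 0)
    (heig : (neumannH N ε).mulVec χ = E • χ) : -2 ≤ E ∧ E ≤ W + 2 := by
  classical
  obtain ⟨i, -, hmax⟩ := Finset.exists_max_image Finset.univ (fun j => |χ j|)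
    ⟨⟨0, hN0⟩, Finset.mem_univ _⟩
  have hmax' : ∀ j, |χ j| ≤ |χ i| := fun j => hmax j (Finset.mem_univ _)
  have hM : 0 < |χ i| := by
    rcases (abs_nonneg (χ i)).lt_or_eq with h | h
    · exact h
    · exfalso; apply hχ; funext j
      have hj := hmax' j
      rw [← h] at hj
      exact abs_eq_zero.mp (le_antisymm hj (abs_nonneg _))
  have hrow := congrFun heig i
  rw [ern_row] at hrow
  simp only [Pi.smul_apply, smul_eq_mul] at hrow
  set T1 := (if h : i.val + 1 < N then χ ⟨i.val + 1, h⟩ else 0) with hT1def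
  set T2 := (if h : 0 < i.val then χ ⟨i.val - 1, lt_of_le_of_lt (Nat.sub_le _ _) i.isLt⟩ else 0)
    with hT2def
  set A1 := (if i.val + 1 < N then (1:ℝ) else 0) with hA1def
  set A2 := (if 0 < i.val then (1:ℝ) else 0) with hA2def
  set C1 := (if i.val = 0 then (1:ℝ) else 0) with hC1def
  set C2 := (if i.val = N - 1 then (1:ℝ) else 0) with hC2def
  have hT1 : |T1| ≤ A1 * |χ i| := by
    by_cases h : i.val + 1 < N
    · rw [hT1def, hA1def, dif_pos h, if_pos h, one_mul]; exact hmax' _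
    · rw [hT1def, hA1def, dif_neg h, if_neg h, zero_mul, abs_zero]
  have hT2 : |T2| ≤ A2 * |χ i| := by
    by_cases h : 0 < i.val
    · rw [hT2def, hA2def, dif_pos h, if_pos h, one_mul]; exact hmax' _
    · rw [hT2def, hA2def, dif_neg h, if_neg h, zero_mul, abs_zero]
  have heq : (E - (ε i + C1 + C2)) * χ i = T1 + T2 := by
    rw [hC1def, hC2def]; linarith [hrow]
  have habs : |E - (ε i + C1 + C2)| * |χ i| ≤ (A1 + A2) * |χ i| := by
    rw [← abs_mul, heq]
    calc |T1 + T2| ≤ |T1| + |T2| := abs_add_le _ _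
    _ ≤ A1 * |χ i| + A2 * |χ i| := add_le_add hT1 hT2
    _ = (A1 + A2) * |χ i| := by ring
  have habs2 : |E - (ε i + C1 + C2)| ≤ A1 + A2 :=
    le_of_mul_le_mul_right habs hM
  have hsum2 : A1 + A2 + C1 + C2 = 2 := by
    have hi := i.isLt
    rw [hA1def, hA2def, hC1def, hC2def]
    split_ifs <;> first | (exfalso; omega) | norm_num
  have hC1n : 0 ≤ C1 := by rw [hC1def]; split_ifs <;> norm_num
  have hC2n : 0 ≤ C2 := by rw [hC2def]; split_ifs <;> norm_num
  have hεi := hε i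
  rw [Set.mem_Icc] at hεi
  rw [abs_le] at habs2
  constructor
  · linarith [habs2.1]
  · linarith [habs2.2]

lemma ern_first_ne (N : ℕ) (hN0 : 0 < N) (ε : Fin N → ℝ) (E : ℝ) (ψ : Fin N → ℝ)
    (hψ : ψ ≠ 0) (heig : (neumannH N ε).mulVec ψ = E • ψ) : ψ ⟨0, hN0⟩ ≠ 0 := by
  intro h0
  have hall : ∀ k, ∀ (hk : k < N), ψ ⟨k, hk⟩ = 0 := by
    intro k
    induction k using Nat.strong_induction_on with
    | _ k ih =>
      match k with
      | 0 => intro hk; exact h0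
      | (m + 1) =>
        intro hk
        have hm : m < N := by omega
        have hrow := congrFun heig ⟨m, hm⟩
        rw [ern_row] at hrow
        simp only [Pi.smul_apply, smul_eq_mul] at hrow
        have h1 : ψ ⟨m, hm⟩ = 0 := ih m (by omega) hm
        have h2 : (if h : 0 < (⟨m, hm⟩ : Fin N).val then
            ψ ⟨(⟨m, hm⟩ : Fin N).val - 1, lt_of_le_of_lt (Nat.sub_le _ _) (⟨m, hm⟩ : Fin N).isLt⟩
            else 0) = 0 := by
          by_cases h : 0 < m
          · rw [dif_pos h]; exact ih (m - 1) (by omega) _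
          · rw [dif_neg h]
        have h3 : (⟨m, hm⟩ : Fin N).val + 1 < N := hk
        rw [dif_pos h3] at hrow
        have : ψ ⟨m + 1, h3⟩ = 0 := by
          rw [h2, h1] at hrow
          simpa using hrow
        exact this
  apply hψ
  funext i
  have := hall i.val i.isLt
  simpa using this

lemma ern_shoot (N : ℕ) (hN0 : 0 < N) (ε : Fin N → ℝ) (E : ℝ) (ψ : Fin N → ℝ)
    (heig : (neumannH N ε).mulVec ψ = E • ψ) (hψ0 : ψ ⟨0, hN0⟩ ≠ 0)
    (U : ℕ → ℝ) (hU : ∀ m, U m = if h : m < N then ψ ⟨m, h⟩ / ψ ⟨0, hN0⟩ else 0) :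
    ∀ k (hk : k + 1 < N),
      U (k + 1) = (E - ε ⟨k, Nat.lt_of_succ_lt hk⟩) * U k - U (k - 1) := by
  intro k hk
  have hk' : k < N := Nat.lt_of_succ_lt hk
  have hrow := congrFun heig ⟨k, hk'⟩
  rw [ern_row] at hrow
  simp only [Pi.smul_apply, smul_eq_mul] at hrow
  have hval : (⟨k, hk'⟩ : Fin N).val = k := rfl
  rw [dif_pos (show (⟨k, hk'⟩ : Fin N).val + 1 < N from hk)] at hrow
  have hne : (⟨k, hk'⟩ : Fin N).val ≠ N - 1 := by simp only [hval]; omega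
  rw [if_neg hne] at hrow
  rcases Nat.eq_zero_or_pos k with hk0 | hk0
  · subst hk0
    rw [dif_neg (by simp : ¬ 0 < (⟨0, hk'⟩ : Fin N).val)] at hrow
    rw [if_pos rfl] at hrow
    have hrow' : ψ ⟨1, hk⟩ + 0 + (ε ⟨0, Nat.lt_of_succ_lt hk⟩ + 1 + 0) * ψ ⟨0, hN0⟩
        = E * ψ ⟨0, hN0⟩ := hrow
    rw [hU 1, hU 0, dif_pos hk, dif_pos hN0]
    field_simp
    linarith [hrow']
  · rw [dif_pos (show 0 < (⟨k, hk'⟩ : Fin N).val from hk0)] at hrow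
    rw [if_neg (by simp only [hval]; omega : ¬ (⟨k, hk'⟩ : Fin N).val = 0)] at hrow
    have hrow' : ψ ⟨k + 1, hk⟩ + ψ ⟨k - 1, by omega⟩
        + (ε ⟨k, Nat.lt_of_succ_lt hk⟩ + 0 + 0) * ψ ⟨k, hk'⟩ = E * ψ ⟨k, hk'⟩ := hrow
    rw [hU (k+1), hU k, hU (k-1), dif_pos hk, dif_pos hk', dif_pos (by omega : k - 1 < N)]
    field_simp
    linarith [hrow']

set_option maxHeartbeats 1000000 in
lemma ern_arith (a s : ℝ) (ha : 1 ≤ a) (hs2 : s ^ 2 = a ^ 2 + 4) (hs : 2 ≤ s) :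
    ∀ n : ℕ, Real.pi * (∑ j ∈ Finset.range n, ernB (a + 1) (j + 1))
      ≤ ∑ k ∈ Finset.range (n + 1), (1 + a ^ 2 / 2 + a * s / 2) ^ k := by
  set ν := 1 + a ^ 2 / 2 + a * s / 2 with hνdef
  set b := a + 1 with hbdef
  clear_value ν b
  have ha0 : (0:ℝ) ≤ a := by linarith
  have hπ' : Real.pi ≤ 3.15 := le_of_lt Real.pi_lt_d2
  have hπ0 : (0:ℝ) < Real.pi := Real.pi_pos
  have h2a : 2 * a ≤ a * s := by nlinarith
  have h2a3 : 2 * a ^ 3 ≤ a ^ 3 * s := by nlinarith [pow_nonneg ha0 3]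
  have hs2a : a ^ 2 * s ^ 2 = a ^ 4 + 4 * a ^ 2 := by
    rw [show a ^ 2 * s ^ 2 = a ^ 2 * (s ^ 2) from by ring, hs2]; ring
  have hν0 : 1 + a + a ^ 2 / 2 ≤ ν := by rw [hνdef]; nlinarith
  have hν52 : 5 / 2 ≤ ν := by nlinarith [hν0]
  have hνnn : (0:ℝ) ≤ ν := by linarith
  have e1 : (0:ℝ) ≤ a - 1 := by linarith
  have hb0 : (0:ℝ) ≤ b := by rw [hbdef]; linarith
  have hexp : ν ^ 2 = 1 + 2 * a ^ 2 + a ^ 4 / 2 + a * s + a ^ 3 * s / 2 := by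
    rw [hνdef]; linear_combination hs2a / 4
  have hν2lb : 1 + 2 * a + 2 * a ^ 2 + a ^ 3 + a ^ 4 / 2 ≤ ν ^ 2 := by
    linarith [hexp, h2a, h2a3]
  have hB2 : ernB b 2 = b := by
    rw [show (2:ℕ) = 0 + 2 from rfl, ernB_add_two, ernB_one, ernB_zero]; ring
  have hbase2 : Real.pi * ernB b 2 ≤ ν ^ 2 := by
    rw [hB2, hbdef]
    have hπa : Real.pi * (a + 1) ≤ 3.15 * (a + 1) :=
      mul_le_mul_of_nonneg_right hπ' (by linarith)
    have hpoly : (3.15 : ℝ) * (a + 1) ≤ 1 + 2 * a + 2 * a ^ 2 + a ^ 3 + a ^ 4 / 2 := by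
      nlinarith [mul_nonneg (mul_nonneg e1 e1) ha0, mul_nonneg e1 ha0,
        mul_nonneg (mul_nonneg (mul_nonneg e1 ha0) ha0) ha0, mul_nonneg e1 e1]
    linarith
  have hq : b * ν + 1 ≤ ν ^ 2 := by
    have h1 : a ^ 2 / 2 ≤ ν - (a + 1) := by linarith
    have h2 : (5 / 2 : ℝ) * (a ^ 2 / 2) ≤ ν * (ν - (a + 1)) :=
      mul_le_mul hν52 h1 (by positivity) hνnn
    have h3 : (1:ℝ) ≤ a ^ 2 := by nlinarith
    rw [hbdef]; nlinarith [h2, h3]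
  have hbase3 : Real.pi * ernB b 3 ≤ ν ^ 3 := by
    have h3 : ernB b 3 = b * b + 1 := by
      rw [show (3:ℕ) = 1 + 2 from rfl, ernB_add_two] 
      rw [show (1:ℕ) + 1 = 0 + 2 from rfl, ernB_add_two, ernB_one, ernB_zero]; ring
    rw [h3]
    have hstep1 : b * b + 1 ≤ b * ν := by
      rw [hbdef]; nlinarith [mul_nonneg e1 ha0, mul_nonneg (mul_nonneg e1 ha0) ha0, hν0]
    calc Real.pi * (b * b + 1) ≤ Real.pi * (b * ν) :=
          mul_le_mul_of_nonneg_left hstep1 (le_of_lt hπ0)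
    _ = (Real.pi * b) * ν := by ring
    _ ≤ ν ^ 2 * ν := by
        apply mul_le_mul_of_nonneg_right _ hνnn
        have h4 : Real.pi * ernB b 2 ≤ ν ^ 2 := hbase2
        rw [hB2] at h4; exact h4
    _ = ν ^ 3 := by ring
  have main : ∀ m, 2 ≤ m → (Real.pi * ernB b m ≤ ν ^ m ∧ Real.pi * ernB b (m + 1) ≤ ν ^ (m + 1)) := by
    intro m hm
    induction m, hm using Nat.le_induction with
    | base => exact ⟨hbase2, hbase3⟩
    | succ n hn ih =>
      refine ⟨ih.2, ?_⟩
      have hrec : ernB b (n + 2) = b * ernB b (n + 1) + ernB b n := ernB_add_two b n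
      have c1 : Real.pi * ernB b (n + 2) = b * (Real.pi * ernB b (n + 1)) + Real.pi * ernB b n := by
        rw [hrec]; ring
      have c2 : b * (Real.pi * ernB b (n + 1)) + Real.pi * ernB b n ≤ b * ν ^ (n + 1) + ν ^ n :=
        add_le_add (mul_le_mul_of_nonneg_left ih.2 hb0) ih.1
      have c3 : b * ν ^ (n + 1) + ν ^ n ≤ ν ^ (n + 2) := by
        have hp : (0:ℝ) ≤ ν ^ n := pow_nonneg hνnn n
        have e2 : ν ^ (n + 1) = ν ^ n * ν := pow_succ ν n
        have e3 : ν ^ (n + 2) = ν ^ n * ν ^ 2 := pow_add ν n 2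
        rw [e2, e3]
        nlinarith [hq, hp]
      linarith
  intro n
  induction n with
  | zero => simp
  | succ n ih =>
    rcases Nat.eq_zero_or_pos n with h0 | hpos
    · subst h0
      rw [Finset.sum_range_one, Finset.sum_range_succ, Finset.sum_range_one]
      rw [ernB_one, pow_one, pow_zero]
      linarith
    · rw [Finset.sum_range_succ, Finset.sum_range_succ
        (f := fun k => ν ^ k) (n := n + 1)]
      have hterm : Real.pi * ernB b (n + 1) ≤ ν ^ (n + 1) := (main (n + 1) (by omega)).1
      linarith [ih]

lemma ern_eta_pos (W : ℝ) (hW : 0 ≤ W) : 0 < eta W := by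
  have hc : (0:ℝ) < 1 / (2 + 2 * (W + 1) ^ 2) := by positivity
  have hlb : ∀ y ∈ ((fun p : ℝ × ℝ => qform p.1 p.2) ''
      (Set.Icc (-(W + 1)) (W + 1) ×ˢ Set.Icc 0 Real.pi)),
      1 / (2 + 2 * (W + 1) ^ 2) ≤ y := by
    rintro y ⟨⟨x, φ⟩, ⟨hx, -⟩, rfl⟩
    rw [Set.mem_Icc] at hx
    have hx2 : x ^ 2 ≤ (W + 1) ^ 2 := by nlinarith [hx.1, hx.2]
    have h1 := ern_qform_lower W x φ hx2
    rw [div_le_iff₀ (by positivity)]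
    linarith [h1]
  have hne : ((fun p : ℝ × ℝ => qform p.1 p.2) ''
      (Set.Icc (-(W + 1)) (W + 1) ×ˢ Set.Icc 0 Real.pi)).Nonempty := by
    refine ⟨qform 0 0, ⟨(0, 0), ⟨?_, ?_⟩, rfl⟩⟩
    · show (0:ℝ) ∈ Set.Icc (-(W + 1)) (W + 1)
      rw [Set.mem_Icc]; constructor <;> linarith
    · show (0:ℝ) ∈ Set.Icc 0 Real.pi
      rw [Set.mem_Icc]; exact ⟨le_refl 0, Real.pi_pos.le⟩
  exact lt_of_lt_of_le hc (le_csInf hne hlb)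

lemma ern_eta_le (W : ℝ) (hW : 0 ≤ W) :
    eta W ≤ 1 + (W + 1) ^ 2 / 2 - (W + 1) * Real.sqrt ((W + 1) ^ 2 + 4) / 2 := by
  set a := W + 1 with hadef
  set s := Real.sqrt (a ^ 2 + 4) with hsdef
  have ha1 : 1 ≤ a := by rw [hadef]; linarith
  have ha0 : 0 < a := by linarith
  have hs0 : 0 < s := by rw [hsdef]; positivity
  have hs2 : s ^ 2 = a ^ 2 + 4 := by rw [hsdef]; exact Real.sq_sqrt (by positivity)
  have has : a < s := by
    by_contra h
    push_neg at h
    have h1 : s * s ≤ a * s := mul_le_mul_of_nonneg_right h hs0.le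
    have h2 : a * s ≤ a * a := mul_le_mul_of_nonneg_left h ha0.le
    nlinarith [hs2]
  set θ := Real.arccos (a / s) with hθdef
  have hfrac0 : 0 < a / s := by positivity
  have hfrac1 : a / s ≤ 1 := by rw [div_le_one hs0]; exact has.le
  have hcos : Real.cos θ = a / s := by
    rw [hθdef]; exact Real.cos_arccos (by linarith) hfrac1
  have hsin : Real.sin θ = 2 / s := by
    rw [hθdef, Real.sin_arccos]
    have h1 : 1 - (a / s) ^ 2 = (2 / s) ^ 2 := by
      field_simp
      linarith [hs2]
    rw [h1, Real.sqrt_sq (by positivity)]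
  have hsincos : Real.sin (θ / 2) * Real.cos (θ / 2) = 1 / s := by
    have h1 : Real.sin (2 * (θ / 2)) = 2 * Real.sin (θ / 2) * Real.cos (θ / 2) :=
      Real.sin_two_mul (θ / 2)
    rw [show 2 * (θ / 2) = θ by ring] at h1
    rw [hsin] at h1
    rw [eq_div_iff hs0.ne']
    field_simp at h1
    linarith
  have hsinsq : Real.sin (θ / 2) ^ 2 = (1 - a / s) / 2 := by
    have h1 : Real.cos (2 * (θ / 2)) = 1 - 2 * Real.sin (θ / 2) ^ 2 := by
      rw [Real.cos_two_mul]
      linarith [Real.sin_sq_add_cos_sq (θ / 2)]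
    rw [show 2 * (θ / 2) = θ by ring, hcos] at h1
    linarith
  have hval : qform a (θ / 2) = 1 + a ^ 2 / 2 - a * s / 2 := by
    simp only [qform]
    rw [show 2 * a * Real.sin (θ / 2) * Real.cos (θ / 2)
        = 2 * a * (Real.sin (θ / 2) * Real.cos (θ / 2)) by ring, hsincos, hsinsq]
    field_simp
    linear_combination a * hs2
  have hmem : (1 + a ^ 2 / 2 - a * s / 2) ∈ ((fun p : ℝ × ℝ => qform p.1 p.2) ''
      (Set.Icc (-(W + 1)) (W + 1) ×ˢ Set.Icc 0 Real.pi)) := by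
    refine ⟨(a, θ / 2), ⟨?_, ?_⟩, hval⟩
    · rw [Set.mem_Icc, ← hadef]; constructor <;> linarith
    · rw [Set.mem_Icc]
      constructor
      · have := Real.arccos_nonneg (a / s); rw [← hθdef] at this; linarith
      · have h1 : θ ≤ Real.pi := by rw [hθdef]; exact Real.arccos_le_pi _
        linarith [Real.pi_pos]
  have hbdd : BddBelow ((fun p : ℝ × ℝ => qform p.1 p.2) ''
      (Set.Icc (-(W + 1)) (W + 1) ×ˢ Set.Icc 0 Real.pi)) := by
    refine ⟨0, ?_⟩
    rintro y ⟨⟨x, φ⟩, -, rfl⟩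
    exact ern_qform_nonneg x φ
  exact csInf_le hbdd hmem

set_option maxHeartbeats 2000000 in
/-- **Eigenvalue repulsion, Neumann case**: any two distinct eigenvalues of the
Neumann Hamiltonian with potential values in `[0, W]` satisfy
`|E₁ − E₂| ≥ π (η(W)⁻¹ − 1) / (η(W)⁻ᴺ − 1)`. -/
theorem eigenvalue_repulsion_neumann
    (N : ℕ) (hN : 1 ≤ N) (W : ℝ) (hW : 0 ≤ W)
    (ε : Fin N → ℝ) (hε : ∀ n, ε n ∈ Set.Icc 0 W)
    (E₁ E₂ : ℝ)
    (h₁ : ∃ v : Fin N → ℝ, v ≠ 0 ∧ (neumannH N ε).mulVec v = E₁ • v)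
    (h₂ : ∃ v : Fin N → ℝ, v ≠ 0 ∧ (neumannH N ε).mulVec v = E₂ • v)
    (hne : E₁ ≠ E₂) :
    Real.pi * ((eta W)⁻¹ - 1) / ((eta W)⁻¹ ^ N - 1) ≤ |E₁ - E₂| := by
  classical
  obtain ⟨ψ, hψne, hψeig⟩ := h₁
  obtain ⟨χ, hχne, hχeig⟩ := h₂
  have hN0 : 0 < N := hN
  have hψ0 := ern_first_ne N hN0 ε E₁ ψ hψne hψeig
  have hχ0 := ern_first_ne N hN0 ε E₂ χ hχne hχeig
  -- orthogonality of eigenvectors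
  have horth : (∑ i : Fin N, ψ i * χ i) = 0 := by
    have hsym := ern_symm N ε
    have h1 : dotProduct ψ ((neumannH N ε).mulVec χ)
        = E₂ * dotProduct ψ χ := by
      rw [hχeig]
      simp only [dotProduct, Pi.smul_apply, smul_eq_mul, Finset.mul_sum]
      apply Finset.sum_congr rfl; intro i _; ring
    have h2 : dotProduct ψ ((neumannH N ε).mulVec χ)
        = E₁ * dotProduct ψ χ := by
      rw [Matrix.dotProduct_mulVec, ← hsym, Matrix.vecMul_transpose, hψeig]
      simp only [dotProduct, Pi.smul_apply, smul_eq_mul, Finset.mul_sum]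
      apply Finset.sum_congr rfl; intro i _; ring
    have h3 : (E₂ - E₁) * dotProduct ψ χ = 0 := by
      have h4 : E₂ * dotProduct ψ χ = E₁ * dotProduct ψ χ := h1.symm.trans h2
      linear_combination h4
    have hδne : E₂ - E₁ ≠ 0 := sub_ne_zero.2 (Ne.symm hne)
    have hdot := (mul_eq_zero.mp h3).resolve_left hδne
    simpa [dotProduct] using hdot
  -- parameters
  set a := W + 1 with hadef
  set srt := Real.sqrt (a ^ 2 + 4) with hsdef
  have ha1 : 1 ≤ a := by rw [hadef]; linarith
  have ha0 : (0:ℝ) < a := by linarith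
  have hs2 : srt ^ 2 = a ^ 2 + 4 := by rw [hsdef]; exact Real.sq_sqrt (by positivity)
  have hsrt0 : 0 < srt := by rw [hsdef]; positivity
  have hs_ge2 : 2 ≤ srt := by nlinarith [hs2, hsrt0]
  set b := W + 2 with hbdef
  have hba : b = a + 1 := by rw [hbdef, hadef]; ring
  have hb0 : (0:ℝ) ≤ b := by rw [hbdef]; linarith
  have hBnn : ∀ m, 0 ≤ ernB b m := ernB_nonneg hb0
  -- Gershgorin bounds for E₂
  obtain ⟨hE2low, hE2high⟩ := ern_gersh N hN0 W ε hε E₂ χ hχne hχeig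
  have hxb : ∀ k (hk : k < N), |E₂ - ε ⟨k, hk⟩| ≤ b := by
    intro k hk
    have h1 := hε ⟨k, hk⟩
    rw [Set.mem_Icc] at h1
    rw [abs_le, hbdef]
    constructor <;> linarith
  -- shooting sequences
  set U : ℕ → ℝ := fun m => if h : m < N then ψ ⟨m, h⟩ / ψ ⟨0, hN0⟩ else 0 with hUdef
  set V : ℕ → ℝ := fun m => if h : m < N then χ ⟨m, h⟩ / χ ⟨0, hN0⟩ else 0 with hVdef
  have hUrec := ern_shoot N hN0 ε E₁ ψ hψeig hψ0 U (fun m => by rw [hUdef])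
  have hVrec := ern_shoot N hN0 ε E₂ χ hχeig hχ0 V (fun m => by rw [hVdef])
  have hU0 : U 0 = 1 := by rw [hUdef]; simp only; rw [dif_pos hN0, div_self hψ0]
  have hV0 : V 0 = 1 := by rw [hVdef]; simp only; rw [dif_pos hN0, div_self hχ0]
  set d : ℕ → ℝ := fun m => V m - U m with hddef
  set δ := E₂ - E₁ with hδdef
  have hd0 : d 0 = 0 := by simp only [hddef]; rw [hU0, hV0]; ring
  have hdrec : ∀ k (hk : k + 1 < N),
      d (k + 1) = (E₂ - ε ⟨k, Nat.lt_of_succ_lt hk⟩) * d k - d (k - 1) + δ * U k := by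
    intro k hk
    simp only [hddef]
    rw [hVrec k hk, hUrec k hk, hδdef]
    ring
  -- bound on d
  have habs3 : ∀ x y z : ℝ, |x - y + z| ≤ |x| + |y| + |z| := by
    intro x y z
    have a1 := abs_add_le (x - y) z
    have a2 := abs_add_le x (-y)
    rw [← sub_eq_add_neg, abs_neg] at a2
    linarith
  have hdb : ∀ k, k < N → |d k| ≤ |δ| * ∑ j ∈ Finset.range k, ernB b (k - j) * |U j| := by
    intro k
    induction k using Nat.strong_induction_on with
    | _ k ih =>
      match k with
      | 0 =>
        intro _
        rw [hd0]
        simp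
      | (m + 1) =>
        intro hk
        have hm : m < N := Nat.lt_of_succ_lt hk
        have hrec := hdrec m hk
        have htri : |d (m + 1)| ≤ b * |d m| + |d (m - 1)| + |δ| * |U m| := by
          rw [hrec]
          have t1 := habs3 ((E₂ - ε ⟨m, Nat.lt_of_succ_lt hk⟩) * d m) (d (m - 1)) (δ * U m)
          rw [abs_mul, abs_mul] at t1
          have t2 : |E₂ - ε ⟨m, Nat.lt_of_succ_lt hk⟩| * |d m| ≤ b * |d m| :=
            mul_le_mul_of_nonneg_right (hxb m (Nat.lt_of_succ_lt hk)) (abs_nonneg _)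
          linarith
        rcases Nat.eq_zero_or_pos m with hm0 | hmpos
        · subst hm0
          simp only [Nat.zero_sub] at htri
          rw [hd0, abs_zero] at htri
          rw [Finset.sum_range_one]
          simp only [Nat.sub_zero, Nat.zero_add, ernB_one, one_mul]
          linarith
        · have h1 := ih m (Nat.lt_succ_self m) hm
          have h2 := ih (m - 1) (by omega) (by omega)
          have hext : ∑ j ∈ Finset.range (m - 1), ernB b (m - 1 - j) * |U j|
              = ∑ j ∈ Finset.range m, ernB b (m - 1 - j) * |U j| := by
            apply Finset.sum_subset
            · intro x hx
              rw [Finset.mem_range] at *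
              omega
            · intro x hx hnx
              rw [Finset.mem_range] at hx hnx
              have hxm : x = m - 1 := by omega
              subst hxm
              rw [Nat.sub_self, ernB_zero, zero_mul]
          rw [hext] at h2
          have hcomb : ∑ j ∈ Finset.range (m + 1), ernB b (m + 1 - j) * |U j|
              = b * (∑ j ∈ Finset.range m, ernB b (m - j) * |U j|)
                + ((∑ j ∈ Finset.range m, ernB b (m - 1 - j) * |U j|) + |U m|) := by
            rw [Finset.sum_range_succ]
            have hlast : ernB b (m + 1 - m) = 1 := by
              rw [show m + 1 - m = 1 by omega, ernB_one]
            rw [hlast, one_mul, Finset.mul_sum, ← add_assoc, ← Finset.sum_add_distrib]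
            congr 1
            apply Finset.sum_congr rfl
            intro j hj
            rw [Finset.mem_range] at hj
            rw [show m + 1 - j = (m - 1 - j) + 2 by omega, ernB_add_two,
                show m - 1 - j + 1 = m - j by omega]
            ring
          have hb1 : b * |d m| ≤ b * (|δ| * ∑ j ∈ Finset.range m, ernB b (m - j) * |U j|) :=
            mul_le_mul_of_nonneg_left h1 hb0
          calc |d (m + 1)| ≤ b * |d m| + |d (m - 1)| + |δ| * |U m| := htri
          _ ≤ b * (|δ| * ∑ j ∈ Finset.range m, ernB b (m - j) * |U j|)
              + (|δ| * ∑ j ∈ Finset.range m, ernB b (m - 1 - j) * |U j|) + |δ| * |U m| := by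
              linarith
          _ = |δ| * ∑ j ∈ Finset.range (m + 1), ernB b (m + 1 - j) * |U j| := by
              rw [hcomb]; ring
  -- the quadratic bound
  set SB := ∑ j ∈ Finset.range (N - 1), ernB b (j + 1) with hSBdef
  have hδSB : 1 ≤ |δ| * SB := by
    have hUV0 : ∑ k ∈ Finset.range N, U k * V k = 0 := by
      have h1 : ∑ k ∈ Finset.range N, U k * V k = ∑ i : Fin N, U i.val * V i.val :=
        (Fin.sum_univ_eq_sum_range (fun k => U k * V k) N).symm
      have h2 : ∀ i : Fin N, U i.val * V i.val = (ψ i * χ i) / (ψ ⟨0, hN0⟩ * χ ⟨0, hN0⟩) := by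
        intro i
        simp only [hUdef, hVdef]
        rw [dif_pos i.isLt, dif_pos i.isLt]
        simp only [Fin.eta]
        rw [div_mul_div_comm]
      rw [h1, Finset.sum_congr rfl (fun i _ => h2 i), ← Finset.sum_div, horth, zero_div]
    have hA : ∑ k ∈ Finset.range N, U k ^ 2 = - ∑ k ∈ Finset.range N, U k * d k := by
      have hterm : ∀ k, U k * d k = U k * V k - U k ^ 2 := by
        intro k; simp only [hddef]; ring
      rw [Finset.sum_congr rfl (fun k _ => hterm k), Finset.sum_sub_distrib, hUV0]
      ring
    have hsumU : (1:ℝ) ≤ ∑ k ∈ Finset.range N, U k ^ 2 := by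
      have h0mem : 0 ∈ Finset.range N := Finset.mem_range.mpr hN0
      have h3 := Finset.single_le_sum (f := fun k => U k ^ 2) (fun i _ => sq_nonneg _) h0mem
      simp only [hU0] at h3
      simpa using h3
    have habsq : ∀ x y : ℝ, |x| * |y| ≤ (x ^ 2 + y ^ 2) / 2 := by
      intro x y
      nlinarith [sq_nonneg (|x| - |y|), sq_abs x, sq_abs y]
    have hSBnn : 0 ≤ SB := Finset.sum_nonneg (fun j _ => hBnn _)
    have hinner1 : ∀ k, k < N → ∑ j ∈ Finset.range k, ernB b (k - j) ≤ SB := by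
      intro k hk
      have hrefl : ∑ j ∈ Finset.range k, ernB b (k - j)
          = ∑ j ∈ Finset.range k, ernB b (j + 1) := by
        have hr := Finset.sum_range_reflect (fun j => ernB b (j + 1)) k
        rw [← hr]
        apply Finset.sum_congr rfl
        intro j hj
        rw [Finset.mem_range] at hj
        congr 1
        omega
      rw [hrefl, hSBdef]
      apply Finset.sum_le_sum_of_subset_of_nonneg
      · intro x hx; rw [Finset.mem_range] at *; omega
      · intro i _ _; exact hBnn _
    have hinner2 : ∀ j, j < N →
        ∑ k ∈ Finset.range N, (if j < k then ernB b (k - j) else 0) ≤ SB := by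
      intro j hj
      have hfil : ∑ k ∈ Finset.range N, (if j < k then ernB b (k - j) else 0)
          = ∑ k ∈ Finset.Ico (j + 1) N, ernB b (k - j) := by
        rw [← Finset.sum_filter]
        apply Finset.sum_congr _ (fun x _ => rfl)
        ext x
        simp only [Finset.mem_filter, Finset.mem_range, Finset.mem_Ico]
        omega
      rw [hfil, Finset.sum_Ico_eq_sum_range]
      have hcg : ∀ i ∈ Finset.range (N - (j + 1)), ernB b (j + 1 + i - j) = ernB b (i + 1) := by
        intro i _; congr 1; omega
      rw [Finset.sum_congr rfl hcg, hSBdef]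
      apply Finset.sum_le_sum_of_subset_of_nonneg
      · intro x hx; rw [Finset.mem_range] at *; omega
      · intro i _ _; exact hBnn _
    have hchain : ∑ k ∈ Finset.range N, U k ^ 2
        ≤ (|δ| * SB) * ∑ k ∈ Finset.range N, U k ^ 2 := by
      have s1 : ∑ k ∈ Finset.range N, U k ^ 2 ≤ ∑ k ∈ Finset.range N, |U k| * |d k| := by
        rw [hA]
        calc - ∑ k ∈ Finset.range N, U k * d k
            ≤ |∑ k ∈ Finset.range N, U k * d k| := neg_le_abs _
        _ ≤ ∑ k ∈ Finset.range N, |U k * d k| := Finset.abs_sum_le_sum_abs _ _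
        _ = ∑ k ∈ Finset.range N, |U k| * |d k| := by
            apply Finset.sum_congr rfl; intro k _; rw [abs_mul]
      have s2 : ∑ k ∈ Finset.range N, |U k| * |d k|
          ≤ |δ| * ∑ k ∈ Finset.range N, ∑ j ∈ Finset.range k,
              ernB b (k - j) * ((U k ^ 2 + U j ^ 2) / 2) := by
        rw [Finset.mul_sum]
        apply Finset.sum_le_sum
        intro k hk
        rw [Finset.mem_range] at hk
        calc |U k| * |d k|
            ≤ |U k| * (|δ| * ∑ j ∈ Finset.range k, ernB b (k - j) * |U j|) :=
              mul_le_mul_of_nonneg_left (hdb k hk) (abs_nonneg _)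
        _ = |δ| * ∑ j ∈ Finset.range k, ernB b (k - j) * (|U k| * |U j|) := by
            rw [Finset.mul_sum, Finset.mul_sum, Finset.mul_sum]
            apply Finset.sum_congr rfl; intro j _; ring
        _ ≤ |δ| * ∑ j ∈ Finset.range k, ernB b (k - j) * ((U k ^ 2 + U j ^ 2) / 2) := by
            apply mul_le_mul_of_nonneg_left _ (abs_nonneg δ)
            apply Finset.sum_le_sum
            intro j _
            exact mul_le_mul_of_nonneg_left (habsq (U k) (U j)) (hBnn _)
      have s3 : ∑ k ∈ Finset.range N, ∑ j ∈ Finset.range k,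
            ernB b (k - j) * ((U k ^ 2 + U j ^ 2) / 2)
          ≤ SB * ∑ k ∈ Finset.range N, U k ^ 2 := by
        have hrw : ∑ k ∈ Finset.range N, ∑ j ∈ Finset.range k,
              ernB b (k - j) * ((U k ^ 2 + U j ^ 2) / 2)
            = (∑ k ∈ Finset.range N, ∑ j ∈ Finset.range k, ernB b (k - j) * (U k ^ 2 / 2))
              + (∑ k ∈ Finset.range N, ∑ j ∈ Finset.range k, ernB b (k - j) * (U j ^ 2 / 2)) := by
          rw [← Finset.sum_add_distrib]
          apply Finset.sum_congr rfl; intro k _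
          rw [← Finset.sum_add_distrib]
          apply Finset.sum_congr rfl; intro j _
          ring
        have hS1 : ∑ k ∈ Finset.range N, ∑ j ∈ Finset.range k, ernB b (k - j) * (U k ^ 2 / 2)
            ≤ SB * ((∑ k ∈ Finset.range N, U k ^ 2) / 2) := by
          have e1 : SB * ((∑ k ∈ Finset.range N, U k ^ 2) / 2)
              = ∑ k ∈ Finset.range N, SB * (U k ^ 2 / 2) := by
            rw [Finset.sum_div, Finset.mul_sum]
          rw [e1]
          apply Finset.sum_le_sum
          intro k hk
          rw [Finset.mem_range] at hk
          have e2 : ∑ j ∈ Finset.range k, ernB b (k - j) * (U k ^ 2 / 2)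
              = (∑ j ∈ Finset.range k, ernB b (k - j)) * (U k ^ 2 / 2) :=
            (Finset.sum_mul _ _ _).symm
          rw [e2]
          exact mul_le_mul_of_nonneg_right (hinner1 k hk) (by positivity)
        have hS2 : ∑ k ∈ Finset.range N, ∑ j ∈ Finset.range k, ernB b (k - j) * (U j ^ 2 / 2)
            ≤ SB * ((∑ k ∈ Finset.range N, U k ^ 2) / 2) := by
          have hconv : ∀ k ∈ Finset.range N, ∑ j ∈ Finset.range k, ernB b (k - j) * (U j ^ 2 / 2)
              = ∑ j ∈ Finset.range N, (if j < k then ernB b (k - j) * (U j ^ 2 / 2) else 0) := by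
            intro k hk
            rw [Finset.mem_range] at hk
            have hfil : (Finset.range N).filter (fun j => j < k) = Finset.range k := by
              ext x
              simp only [Finset.mem_filter, Finset.mem_range]
              omega
            rw [← Finset.sum_filter, hfil]
          rw [Finset.sum_congr rfl hconv, Finset.sum_comm]
          have e1 : SB * ((∑ k ∈ Finset.range N, U k ^ 2) / 2)
              = ∑ j ∈ Finset.range N, SB * (U j ^ 2 / 2) := by
            rw [Finset.sum_div, Finset.mul_sum]
          rw [e1]
          apply Finset.sum_le_sum
          intro j hj
          rw [Finset.mem_range] at hj
          have e2 : ∑ k ∈ Finset.range N, (if j < k then ernB b (k - j) * (U j ^ 2 / 2) else 0)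
              = (∑ k ∈ Finset.range N, (if j < k then ernB b (k - j) else 0)) * (U j ^ 2 / 2) := by
            rw [Finset.sum_mul]
            apply Finset.sum_congr rfl
            intro k _
            split_ifs <;> ring
          rw [e2]
          exact mul_le_mul_of_nonneg_right (hinner2 j hj) (by positivity)
        rw [hrw]
        linarith [hS1, hS2]
      calc ∑ k ∈ Finset.range N, U k ^ 2 ≤ ∑ k ∈ Finset.range N, |U k| * |d k| := s1
      _ ≤ |δ| * ∑ k ∈ Finset.range N, ∑ j ∈ Finset.range k,
            ernB b (k - j) * ((U k ^ 2 + U j ^ 2) / 2) := s2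
      _ ≤ |δ| * (SB * ∑ k ∈ Finset.range N, U k ^ 2) :=
          mul_le_mul_of_nonneg_left s3 (abs_nonneg _)
      _ = (|δ| * SB) * ∑ k ∈ Finset.range N, U k ^ 2 := by ring
    exact (le_mul_iff_one_le_left (lt_of_lt_of_le one_pos hsumU)).mp hchain
  -- final numeric chain
  set ν := 1 + a ^ 2 / 2 + a * srt / 2 with hνdef
  clear_value ν
  have h2as : 2 ≤ a * srt := by
    have h5 : (1:ℝ) * 2 ≤ a * srt := mul_le_mul ha1 hs_ge2 (by norm_num) (le_of_lt ha0)
    linarith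
  have hν52 : 5 / 2 ≤ ν := by rw [hνdef]; nlinarith [h2as, sq_nonneg a]
  have hνnn : (0:ℝ) ≤ ν := by linarith
  have hν1 : 1 < ν := by linarith
  have hηpos := ern_eta_pos W hW
  have hηle' : eta W ≤ 1 + a ^ 2 / 2 - a * srt / 2 := by
    rw [hsdef, hadef]
    exact ern_eta_le W hW
  have hgν : (1 + a ^ 2 / 2 - a * srt / 2) * ν = 1 := by
    rw [hνdef]; linear_combination (-(a ^ 2) / 4) * hs2
  have hηtmp : eta W * ν ≤ 1 := by
    calc eta W * ν ≤ (1 + a ^ 2 / 2 - a * srt / 2) * ν :=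
          mul_le_mul_of_nonneg_right hηle' hνnn
    _ = 1 := hgν
  have hνt : ν ≤ (eta W)⁻¹ := by
    rw [inv_eq_one_div, le_div_iff₀ hηpos]
    nlinarith [hηtmp]
  set t := (eta W)⁻¹ with htdef
  clear_value t
  have ht1 : 1 < t := lt_of_lt_of_le hν1 hνt
  have hsnup : (0:ℝ) < ∑ k ∈ Finset.range N, ν ^ k := by
    have h0mem : 0 ∈ Finset.range N := Finset.mem_range.mpr hN0
    have h2 := Finset.single_le_sum (f := fun k => ν ^ k) (fun i _ => pow_nonneg hνnn i) h0mem
    simp only [pow_zero] at h2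
    linarith
  have hsle : ∑ k ∈ Finset.range N, ν ^ k ≤ ∑ k ∈ Finset.range N, t ^ k :=
    Finset.sum_le_sum (fun k _ => pow_le_pow_left₀ hνnn hνt k)
  have hstp : 0 < ∑ k ∈ Finset.range N, t ^ k := lt_of_lt_of_le hsnup hsle
  have hSBpos : 0 < SB := by
    rcases lt_or_ge 0 SB with h | h
    · exact h
    · exfalso
      have h4 : |δ| * SB ≤ 0 := mul_nonpos_of_nonneg_of_nonpos (abs_nonneg _) h
      linarith
  have hgeom := geom_sum_mul t N
  have hrw : Real.pi * (t - 1) / (t ^ N - 1)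
      = Real.pi / (∑ k ∈ Finset.range N, t ^ k) := by
    rw [← hgeom, mul_div_mul_right _ _ (ne_of_gt (by linarith : (0:ℝ) < t - 1))]
  have hkey : Real.pi * SB ≤ ∑ k ∈ Finset.range N, ν ^ k := by
    have harith := ern_arith a srt ha1 hs2 hs_ge2 (N - 1)
    rw [← hba] at harith
    rw [show N - 1 + 1 = N by omega] at harith
    rw [← hνdef] at harith
    rw [hSBdef]
    exact harith
  calc Real.pi * (t - 1) / (t ^ N - 1) = Real.pi / (∑ k ∈ Finset.range N, t ^ k) := hrw
  _ ≤ Real.pi / (∑ k ∈ Finset.range N, ν ^ k) := by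
      rw [div_le_div_iff₀ hstp hsnup]
      exact mul_le_mul_of_nonneg_left hsle Real.pi_pos.le
  _ ≤ 1 / SB := by
      rw [div_le_div_iff₀ hsnup hSBpos]
      linarith [hkey]
  _ ≤ |δ| := by
      rw [div_le_iff₀ hSBpos]
      linarith [hδSB]
  _ = |E₁ - E₂| := by rw [hδdef, abs_sub_comm]
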